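/- For all α > 0, ρ > 0, θ ∈ [−π, π] and every integer k, ∫_{−π}^{π} e^{ikθ′}·exp(−α·ρ·min(|θ − θ′|, 2π − |θ − θ′|))·ρ dθ′ = E_k·e^{ikθ}, where E_k := 2αρ²(1 − (−1)^{|k|}·e^{−αρπ}) / (k² + α²ρ²). -/

import Mathlib

open Real

private lemma int_exp_affine (b c : ℂ) (hb : b ≠ 0) (s t : ℝ) :
    ∫ x in s..t, Complex.exp (b * x + c) =
      (Complex.exp (b * t + c) - Complex.exp (b * s + c)) / b := by
  simp only [Complex.exp_add]
  rw [intervalIntegral.integral_mul_const, integral_exp_mul_complex hb]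
  ring

private lemma exp_form (k : ℤ) (ρ x E : ℝ) (b c : ℂ)
    (h : Complex.I * (k : ℂ) * (x : ℂ) + (E : ℂ) = b * x + c) :
    Complex.exp (Complex.I * (k : ℂ) * (x : ℂ)) * ((Real.exp E * ρ : ℝ) : ℂ)
      = (ρ : ℂ) * Complex.exp (b * x + c) := by
  rw [← h, Complex.ofReal_mul, Complex.ofReal_exp, ← mul_assoc, ← Complex.exp_add, mul_comm]

private lemma circle_mode_conv_main (α ρ θ : ℝ) (k : ℤ) (hα : 0 < α) (hρ : 0 < ρ)
    (h0 : 0 ≤ θ) (h1 : θ ≤ π) :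
    (∫ θ' in (-π)..π,
        Complex.exp (Complex.I * (k : ℂ) * (θ' : ℂ)) *
          ((Real.exp (-(α * (ρ * min |θ - θ'| (2 * π - |θ - θ'|)))) * ρ : ℝ) : ℂ))
      = (((2 * α * ρ ^ 2 * (1 - (-1 : ℝ) ^ |k| * Real.exp (-(α * ρ * π)))) /
            ((k : ℝ) ^ 2 + α ^ 2 * ρ ^ 2) : ℝ) : ℂ) *
          Complex.exp (Complex.I * (k : ℂ) * (θ : ℂ)) := by
  have hπ := Real.pi_pos
  have hb1 : Complex.I * (k : ℂ) + (α : ℂ) * (ρ : ℂ) ≠ 0 := by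
    intro h
    have := congrArg Complex.re h
    simp [Complex.add_re, Complex.mul_re] at this
    rcases this with h|h <;> linarith
  have hb2 : Complex.I * (k : ℂ) - (α : ℂ) * (ρ : ℂ) ≠ 0 := by
    intro h
    have := congrArg Complex.re h
    simp [Complex.sub_re, Complex.mul_re] at this
    rcases this with h|h <;> linarith
  have hc : Continuous (fun θ' : ℝ => Complex.exp (Complex.I * (k : ℂ) * (θ' : ℂ)) *
      ((Real.exp (-(α * (ρ * min |θ - θ'| (2 * π - |θ - θ'|)))) * ρ : ℝ) : ℂ)) := by
    fun_prop
  rw [← intervalIntegral.integral_add_adjacent_intervals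
      (hc.intervalIntegrable (-π) (θ - π)) (hc.intervalIntegrable (θ - π) π),
    ← intervalIntegral.integral_add_adjacent_intervals
      (hc.intervalIntegrable (θ - π) θ) (hc.intervalIntegrable θ π)]
  have I1 : (∫ θ' in (-π)..(θ - π),
        Complex.exp (Complex.I * (k : ℂ) * (θ' : ℂ)) *
          ((Real.exp (-(α * (ρ * min |θ - θ'| (2 * π - |θ - θ'|)))) * ρ : ℝ) : ℂ))
      = (ρ : ℂ) * ((Complex.exp ((Complex.I * k - (α : ℂ) * ρ) * ((θ - π : ℝ) : ℂ)
            + ((α : ℂ) * ρ * θ - 2 * ((α : ℂ) * ρ) * π))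
          - Complex.exp ((Complex.I * k - (α : ℂ) * ρ) * ((-π : ℝ) : ℂ)
            + ((α : ℂ) * ρ * θ - 2 * ((α : ℂ) * ρ) * π))) / (Complex.I * k - (α : ℂ) * ρ)) := by
    rw [intervalIntegral.integral_congr
        (g := fun x : ℝ => (ρ : ℂ) * Complex.exp ((Complex.I * k - (α : ℂ) * ρ) * (x : ℂ)
          + ((α : ℂ) * ρ * θ - 2 * ((α : ℂ) * ρ) * π)))
        (fun x hx => by
          rw [Set.uIcc_of_le (by linarith)] at hx
          obtain ⟨hx1, hx2⟩ := hx
          have habs : |θ - x| = θ - x := abs_of_nonneg (by linarith)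
          show Complex.exp _ * _ = _
          rw [habs, min_eq_right (by linarith)]
          exact exp_form k ρ x _ _ _ (by push_cast; ring))]
    rw [intervalIntegral.integral_const_mul, int_exp_affine _ _ hb2]
  have I2 : (∫ θ' in (θ - π)..θ,
        Complex.exp (Complex.I * (k : ℂ) * (θ' : ℂ)) *
          ((Real.exp (-(α * (ρ * min |θ - θ'| (2 * π - |θ - θ'|)))) * ρ : ℝ) : ℂ))
      = (ρ : ℂ) * ((Complex.exp ((Complex.I * k + (α : ℂ) * ρ) * (θ : ℂ)
            + (-((α : ℂ) * ρ * θ)))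
          - Complex.exp ((Complex.I * k + (α : ℂ) * ρ) * ((θ - π : ℝ) : ℂ)
            + (-((α : ℂ) * ρ * θ)))) / (Complex.I * k + (α : ℂ) * ρ)) := by
    rw [intervalIntegral.integral_congr
        (g := fun x : ℝ => (ρ : ℂ) * Complex.exp ((Complex.I * k + (α : ℂ) * ρ) * (x : ℂ)
          + (-((α : ℂ) * ρ * θ))))
        (fun x hx => by
          rw [Set.uIcc_of_le (by linarith)] at hx
          obtain ⟨hx1, hx2⟩ := hx
          have habs : |θ - x| = θ - x := abs_of_nonneg (by linarith)
          show Complex.exp _ * _ = _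
          rw [habs, min_eq_left (by linarith)]
          exact exp_form k ρ x _ _ _ (by push_cast; ring))]
    rw [intervalIntegral.integral_const_mul, int_exp_affine _ _ hb1]
  have I3 : (∫ θ' in θ..π,
        Complex.exp (Complex.I * (k : ℂ) * (θ' : ℂ)) *
          ((Real.exp (-(α * (ρ * min |θ - θ'| (2 * π - |θ - θ'|)))) * ρ : ℝ) : ℂ))
      = (ρ : ℂ) * ((Complex.exp ((Complex.I * k - (α : ℂ) * ρ) * (π : ℂ)
            + ((α : ℂ) * ρ * θ))
          - Complex.exp ((Complex.I * k - (α : ℂ) * ρ) * (θ : ℂ)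
            + ((α : ℂ) * ρ * θ))) / (Complex.I * k - (α : ℂ) * ρ)) := by
    rw [intervalIntegral.integral_congr
        (g := fun x : ℝ => (ρ : ℂ) * Complex.exp ((Complex.I * k - (α : ℂ) * ρ) * (x : ℂ)
          + ((α : ℂ) * ρ * θ)))
        (fun x hx => by
          rw [Set.uIcc_of_le (by linarith)] at hx
          obtain ⟨hx1, hx2⟩ := hx
          have habs : |θ - x| = x - θ := by rw [abs_sub_comm]; exact abs_of_nonneg (by linarith)
          show Complex.exp _ * _ = _
          rw [habs, min_eq_left (by linarith)]
          exact exp_form k ρ x _ _ _ (by push_cast; ring))]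
    rw [intervalIntegral.integral_const_mul, int_exp_affine _ _ hb2]
  rw [I1, I2, I3]
  have hu_inv : ((-1 : ℂ) ^ k)⁻¹ = (-1 : ℂ) ^ k := by
    refine inv_eq_of_mul_eq_one_left ?_
    rw [← mul_zpow]; norm_num
  have hZ : Complex.exp (Complex.I * (k : ℂ) * (π : ℂ)) = (-1 : ℂ) ^ k := by
    rw [show Complex.I * (k : ℂ) * (π : ℂ) = (k : ℂ) * ((π : ℂ) * Complex.I) by ring,
      Complex.exp_int_mul, Complex.exp_pi_mul_I]
  have habsk : ((-1 : ℂ)) ^ |k| = (-1 : ℂ) ^ k := by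
    rcases abs_choice k with h | h
    · rw [h]
    · rw [h, zpow_neg, hu_inv]
  have hden : ((k : ℂ)) ^ 2 + (α : ℂ) ^ 2 * (ρ : ℂ) ^ 2
      = -((Complex.I * (k : ℂ) + (α : ℂ) * ρ) * (Complex.I * (k : ℂ) - (α : ℂ) * ρ)) := by
    linear_combination ((k : ℂ)) ^ 2 * Complex.I_sq
  rw [show (Complex.I * k - (α : ℂ) * ρ) * ((θ - π : ℝ) : ℂ)
        + ((α : ℂ) * ρ * θ - 2 * ((α : ℂ) * ρ) * π)
      = Complex.I * (k : ℂ) * (θ : ℂ) + (-(Complex.I * (k : ℂ) * (π : ℂ)))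
        + (-((α : ℂ) * (ρ : ℂ) * (π : ℂ))) by push_cast; ring,
    show (Complex.I * k - (α : ℂ) * ρ) * ((-π : ℝ) : ℂ)
        + ((α : ℂ) * ρ * θ - 2 * ((α : ℂ) * ρ) * π)
      = (α : ℂ) * (ρ : ℂ) * (θ : ℂ) + (-(Complex.I * (k : ℂ) * (π : ℂ)))
        + (-((α : ℂ) * (ρ : ℂ) * (π : ℂ))) by push_cast; ring,
    show (Complex.I * k + (α : ℂ) * ρ) * (θ : ℂ) + (-((α : ℂ) * ρ * θ))
      = Complex.I * (k : ℂ) * (θ : ℂ) by ring,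
    show (Complex.I * k + (α : ℂ) * ρ) * ((θ - π : ℝ) : ℂ) + (-((α : ℂ) * ρ * θ))
      = Complex.I * (k : ℂ) * (θ : ℂ) + (-(Complex.I * (k : ℂ) * (π : ℂ)))
        + (-((α : ℂ) * (ρ : ℂ) * (π : ℂ))) by push_cast; ring,
    show (Complex.I * k - (α : ℂ) * ρ) * (π : ℂ) + ((α : ℂ) * ρ * θ)
      = Complex.I * (k : ℂ) * (π : ℂ)
        + ((α : ℂ) * (ρ : ℂ) * (θ : ℂ) + (-((α : ℂ) * (ρ : ℂ) * (π : ℂ)))) by ring,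
    show (Complex.I * k - (α : ℂ) * ρ) * (θ : ℂ) + ((α : ℂ) * ρ * θ)
      = Complex.I * (k : ℂ) * (θ : ℂ) by ring]
  push_cast [Complex.ofReal_exp]
  simp only [Complex.exp_add, Complex.exp_neg, hZ, hu_inv, habsk, hden]
  have hX := Complex.exp_ne_zero (Complex.I * (k : ℂ) * (θ : ℂ))
  have hY := Complex.exp_ne_zero ((α : ℂ) * (ρ : ℂ) * (θ : ℂ))
  have hW := Complex.exp_ne_zero ((α : ℂ) * (ρ : ℂ) * (π : ℂ))
  generalize hA : Complex.I * (k : ℂ) - (α : ℂ) * (ρ : ℂ) = A at hb2 ⊢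
  generalize hB : Complex.I * (k : ℂ) + (α : ℂ) * (ρ : ℂ) = B at hb1 ⊢
  generalize Complex.exp ((α : ℂ) * (ρ : ℂ) * (π : ℂ)) = E at hW ⊢
  field_simp
  rw [← hA, ← hB]
  ring

private lemma integral_flip (g : ℝ → ℂ) :
    (∫ x in (-π)..π, g (-x)) = ∫ x in (-π)..π, g x := by
  rw [intervalIntegral.integral_comp_neg]; norm_num

theorem circle_mode_convolution (α ρ θ : ℝ) (k : ℤ) (hα : 0 < α) (hρ : 0 < ρ)
    (hθ : θ ∈ Set.Icc (-π) π) :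
    (∫ θ' in (-π)..π,
        Complex.exp (Complex.I * (k : ℂ) * (θ' : ℂ)) *
          ((Real.exp (-(α * (ρ * min |θ - θ'| (2 * π - |θ - θ'|)))) * ρ : ℝ) : ℂ))
      = (((2 * α * ρ ^ 2 * (1 - (-1 : ℝ) ^ |k| * Real.exp (-(α * ρ * π)))) /
            ((k : ℝ) ^ 2 + α ^ 2 * ρ ^ 2) : ℝ) : ℂ) *
          Complex.exp (Complex.I * (k : ℂ) * (θ : ℂ)) := by
  obtain ⟨hθ1, hθ2⟩ := hθ
  rcases le_or_gt 0 θ with h0 | h0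
  · exact circle_mode_conv_main α ρ θ k hα hρ h0 hθ2
  · have hm := circle_mode_conv_main α ρ (-θ) (-k) hα hρ (by linarith) (by linarith)
    calc (∫ θ' in (-π)..π,
          Complex.exp (Complex.I * (k : ℂ) * (θ' : ℂ)) *
            ((Real.exp (-(α * (ρ * min |θ - θ'| (2 * π - |θ - θ'|)))) * ρ : ℝ) : ℂ))
        = ∫ x in (-π)..π, (fun θ' : ℝ => Complex.exp (Complex.I * ((-k : ℤ) : ℂ) * (θ' : ℂ)) *
            ((Real.exp (-(α * (ρ * min |-θ - θ'| (2 * π - |-θ - θ'|)))) * ρ : ℝ) : ℂ)) (-x) := by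
          refine intervalIntegral.integral_congr fun x _ => ?_
          show _ = Complex.exp (Complex.I * ((-k : ℤ) : ℂ) * ((-x : ℝ) : ℂ)) *
            ((Real.exp (-(α * (ρ * min |-θ - -x| (2 * π - |-θ - -x|)))) * ρ : ℝ) : ℂ)
          rw [show (-θ - -x) = -(θ - x) by ring, abs_neg,
            show Complex.I * ((-k : ℤ) : ℂ) * ((-x : ℝ) : ℂ)
              = Complex.I * (k : ℂ) * (x : ℂ) by push_cast; ring]
      _ = ∫ x in (-π)..π, Complex.exp (Complex.I * ((-k : ℤ) : ℂ) * (x : ℂ)) *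
            ((Real.exp (-(α * (ρ * min |-θ - x| (2 * π - |-θ - x|)))) * ρ : ℝ) : ℂ) := by
          exact integral_flip (fun θ' : ℝ =>
            Complex.exp (Complex.I * ((-k : ℤ) : ℂ) * (θ' : ℂ)) *
            ((Real.exp (-(α * (ρ * min |-θ - θ'| (2 * π - |-θ - θ'|)))) * ρ : ℝ) : ℂ))
      _ = (((2 * α * ρ ^ 2 * (1 - (-1 : ℝ) ^ |(-k : ℤ)| * Real.exp (-(α * ρ * π)))) /
            (((-k : ℤ) : ℝ) ^ 2 + α ^ 2 * ρ ^ 2) : ℝ) : ℂ) *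
          Complex.exp (Complex.I * ((-k : ℤ) : ℂ) * ((-θ : ℝ) : ℂ)) := hm
      _ = (((2 * α * ρ ^ 2 * (1 - (-1 : ℝ) ^ |k| * Real.exp (-(α * ρ * π)))) /
            ((k : ℝ) ^ 2 + α ^ 2 * ρ ^ 2) : ℝ) : ℂ) *
          Complex.exp (Complex.I * (k : ℂ) * (θ : ℂ)) := by
          rw [abs_neg, show Complex.I * ((-k : ℤ) : ℂ) * ((-θ : ℝ) : ℂ)
              = Complex.I * (k : ℂ) * (θ : ℂ) by push_cast; ring]
          norm_num
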